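/- arXiv:2603.24566 — 2 statements merged into one kernel-verified Lean document; each statement's English description precedes it below -/
import Mathlib

section
/- Given vectors b_e, b_u ∈ ℝ^m and scalars c_e, c_u ∈ ℝ, the system b_eᵀv ≥ c_e, b_uᵀv ≥ c_u admits a solution v ∈ ℝ^m if and only if the following three conditions hold: (1) b_e = 0 implies c_e ≤ 0; (2) b_u = 0 implies c_u ≤ 0; (3) if ‖b_e‖·‖b_u‖ + ⟨b_e, b_u⟩ = 0, then c_e·‖b_u‖ + c_u·‖b_e‖ ≤ 0. -/
open scoped InnerProductSpace

/-- Compatibility of two affine constraints in ℝ^m (Proposition 2). -/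
theorem stmt_3 {m : ℕ} (be bu : EuclideanSpace ℝ (Fin m)) (ce cu : ℝ) :
    (∃ v : EuclideanSpace ℝ (Fin m), ⟪be, v⟫_ℝ ≥ ce ∧ ⟪bu, v⟫_ℝ ≥ cu) ↔
      ((be = 0 → ce ≤ 0) ∧ (bu = 0 → cu ≤ 0) ∧
        (‖be‖ * ‖bu‖ + ⟪be, bu⟫_ℝ = 0 → ce * ‖bu‖ + cu * ‖be‖ ≤ 0)) := by
  constructor
  · rintro ⟨v, h1, h2⟩
    refine ⟨fun h => by simpa [h] using h1, fun h => by simpa [h] using h2, fun hs => ?_⟩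
    have hw : (‖bu‖ : ℝ) • be + (‖be‖ : ℝ) • bu = 0 := by
      rw [← inner_self_eq_zero (𝕜 := ℝ)]
      have e1 : ⟪be, be⟫_ℝ = ‖be‖ ^ 2 := real_inner_self_eq_norm_sq be
      have e2 : ⟪bu, bu⟫_ℝ = ‖bu‖ ^ 2 := real_inner_self_eq_norm_sq bu
      have e3 : ⟪bu, be⟫_ℝ = ⟪be, bu⟫_ℝ := real_inner_comm _ _
      simp only [inner_add_left, inner_add_right, real_inner_smul_left,
        real_inner_smul_right, e1, e2, e3]
      linear_combination (2 * ‖be‖ * ‖bu‖) * hs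
    have hz : ‖bu‖ * ⟪be, v⟫_ℝ + ‖be‖ * ⟪bu, v⟫_ℝ = 0 := by
      have h0 : ⟪(‖bu‖ : ℝ) • be + (‖be‖ : ℝ) • bu, v⟫_ℝ = 0 := by
        rw [hw, inner_zero_left]
      rw [inner_add_left, real_inner_smul_left, real_inner_smul_left] at h0
      exact h0
    nlinarith [norm_nonneg be, norm_nonneg bu,
      mul_le_mul_of_nonneg_left h1 (norm_nonneg bu),
      mul_le_mul_of_nonneg_left h2 (norm_nonneg be)]
  · rintro ⟨hA, hB, hC⟩
    by_cases hbe : be = 0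
    · by_cases hbu : bu = 0
      · exact ⟨0, by simpa [hbe] using hA hbe, by simpa [hbu] using hB hbu⟩
      · refine ⟨(cu / ‖bu‖ ^ 2) • bu, ?_, ?_⟩
        · simpa [hbe] using hA hbe
        · have hbu' : ‖bu‖ ≠ 0 := norm_ne_zero_iff.mpr hbu
          rw [real_inner_smul_right, real_inner_self_eq_norm_sq]
          field_simp
          exact le_rfl
    · by_cases hbu : bu = 0
      · refine ⟨(ce / ‖be‖ ^ 2) • be, ?_, ?_⟩
        · have hbe' : ‖be‖ ≠ 0 := norm_ne_zero_iff.mpr hbe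
          rw [real_inner_smul_right, real_inner_self_eq_norm_sq]
          field_simp
          exact le_rfl
        · simpa [hbu] using hB hbu
      · have hbe' : (0:ℝ) < ‖be‖ := norm_pos_iff.mpr hbe
        have hbu' : (0:ℝ) < ‖bu‖ := norm_pos_iff.mpr hbu
        have hcs : |⟪be, bu⟫_ℝ| ≤ ‖be‖ * ‖bu‖ := abs_real_inner_le_norm be bu
        have hs0 : 0 ≤ ‖be‖ * ‖bu‖ + ⟪be, bu⟫_ℝ := by
          cases abs_le.mp hcs with
          | intro hl hr => linarith
        rcases eq_or_lt_of_le hs0 with hs | hs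
        · -- anti-parallel case
          have hC' := hC hs.symm
          have hip : ⟪bu, be⟫_ℝ = -(‖be‖ * ‖bu‖) := by
            rw [real_inner_comm]; linarith
          refine ⟨(ce / ‖be‖ ^ 2) • be, ?_, ?_⟩
          · rw [real_inner_smul_right, real_inner_self_eq_norm_sq]
            rw [div_mul_cancel₀]
            positivity
          · rw [real_inner_smul_right, hip, ge_iff_le]
            rw [div_mul_eq_mul_div, le_div_iff₀ (by positivity)]
            nlinarith
        · have hc : ⟪bu, be⟫_ℝ = ⟪be, bu⟫_ℝ := real_inner_comm _ _
          have hbs : (0:ℝ) < ‖be‖ * (‖be‖ * ‖bu‖ + ⟪be, bu⟫_ℝ) := by positivity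
          have hus : (0:ℝ) < ‖bu‖ * (‖be‖ * ‖bu‖ + ⟪be, bu⟫_ℝ) := by positivity
          obtain ⟨t, ht1, ht2⟩ : ∃ t : ℝ,
              ce / (‖be‖ * (‖be‖ * ‖bu‖ + ⟪be, bu⟫_ℝ)) ≤ t ∧
              cu / (‖bu‖ * (‖be‖ * ‖bu‖ + ⟪be, bu⟫_ℝ)) ≤ t :=
            ⟨max _ _, le_max_left _ _, le_max_right _ _⟩
          refine ⟨t • ((‖bu‖ : ℝ) • be + (‖be‖ : ℝ) • bu), ?_, ?_⟩
          · have he : ⟪be, t • ((‖bu‖ : ℝ) • be + (‖be‖ : ℝ) • bu)⟫_ℝ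
                = t * (‖be‖ * (‖be‖ * ‖bu‖ + ⟪be, bu⟫_ℝ)) := by
              simp only [inner_add_right, real_inner_smul_right,
                real_inner_self_eq_norm_sq]
              ring
            rw [he, ge_iff_le, ← div_le_iff₀ hbs]
            exact ht1
          · have he : ⟪bu, t • ((‖bu‖ : ℝ) • be + (‖be‖ : ℝ) • bu)⟫_ℝ
                = t * (‖bu‖ * (‖be‖ * ‖bu‖ + ⟪be, bu⟫_ℝ)) := by
              simp only [inner_add_right, real_inner_smul_right,
                real_inner_self_eq_norm_sq, hc]
              ring
            rw [he, ge_iff_le, ← div_le_iff₀ hus]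
            exact ht2
end

section
/- Let b_e, b_u ∈ ℝ^m satisfy: b_e = 0 ⟹ c_e ≤ 0, b_u = 0 ⟹ c_u ≤ 0, and if b_e, b_u are both nonzero and anti-parallel then c_e‖b_u‖ + c_u‖b_e‖ ≤ 0. If b_e and b_u are not anti-parallel and both nonzero (i.e., ‖b_e‖‖b_u‖ + ⟨b_e,b_u⟩ > 0), then there exists v ∈ ℝ^m with b_eᵀv ≥ c_e and b_uᵀv ≥ c_u. -/
open scoped InnerProductSpace

/-- Sufficiency in the non-anti-parallel case: a common solution exists. -/
theorem stmt_6 {m : ℕ} (be bu : EuclideanSpace ℝ (Fin m)) (ce cu : ℝ)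
    (h1 : be = 0 → ce ≤ 0) (h2 : bu = 0 → cu ≤ 0)
    (h3 : be ≠ 0 → bu ≠ 0 → ‖be‖ * ‖bu‖ + ⟪be, bu⟫_ℝ = 0 →
      ce * ‖bu‖ + cu * ‖be‖ ≤ 0)
    (hbe : be ≠ 0) (hbu : bu ≠ 0)
    (hnot : 0 < ‖be‖ * ‖bu‖ + ⟪be, bu⟫_ℝ) :
    ∃ v : EuclideanSpace ℝ (Fin m), ⟪be, v⟫_ℝ ≥ ce ∧ ⟪bu, v⟫_ℝ ≥ cu := by
  set a := ‖be‖ with ha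
  set b := ‖bu‖ with hb
  set s := ⟪be, bu⟫_ℝ with hs
  have hapos : 0 < a := norm_pos_iff.mpr hbe
  have hbpos : 0 < b := norm_pos_iff.mpr hbu
  set D := a * b + s with hD
  have hDne : D ≠ 0 := ne_of_gt hnot
  set M := max (ce * b) (cu * a) with hM
  set t := M / D with ht
  refine ⟨t • (a⁻¹ • be + b⁻¹ • bu), ?_, ?_⟩
  · have key : ⟪be, t • (a⁻¹ • be + b⁻¹ • bu)⟫_ℝ
        = t * (a⁻¹ * ⟪be, be⟫_ℝ + b⁻¹ * s) := by
      simp only [inner_add_right, inner_smul_right]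
      rw [← hs]
    rw [key, real_inner_self_eq_norm_sq, ← ha]
    have h4 : t * (a⁻¹ * a ^ 2 + b⁻¹ * s) = M / b := by
      rw [ht, hD]
      have hD' : a * b + s ≠ 0 := hDne
      field_simp
    rw [h4, ge_iff_le, le_div_iff₀ hbpos]
    exact le_max_left _ _
  · have key : ⟪bu, t • (a⁻¹ • be + b⁻¹ • bu)⟫_ℝ
        = t * (a⁻¹ * s + b⁻¹ * ⟪bu, bu⟫_ℝ) := by
      simp only [inner_add_right, inner_smul_right]
      rw [← real_inner_comm bu be, ← hs]
    rw [key, real_inner_self_eq_norm_sq, ← hb]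
    have h4 : t * (a⁻¹ * s + b⁻¹ * b ^ 2) = M / a := by
      rw [ht, hD]
      have hD' : a * b + s ≠ 0 := hDne
      field_simp
      ring
    rw [h4, ge_iff_le, le_div_iff₀ hapos]
    exact le_max_right _ _
end
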